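/- Let (X, d) be a metric space, let P ⊆ X be a finite set of at least two points with spread Φ, let ε ∈ (0,1), and let q ∈ X. Let v₀, v₁, …, v_k be points of P such that d(q, v_{m+1}) ≤ (1 − ε/4)·d(q, v_m) for every m < k, and such that d(q, v_{k−1}) > (1 + ε)·d(q, P). Then k ≤ 1 + log(1 + 2Φ)/log(1/(1 − ε/4)). -/
import Mathlib


/-- **Step count of greedy walks.** In a metric space, let `P` be a finite set of at
least two points with spread `Φ`, `ε ∈ (0,1)`, and `q` a query point. If
`v₀, …, v_k ∈ P` satisfy `d(q, v_{m+1}) ≤ (1 - ε/4) d(q, v_m)` for all `m < k`, and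
`d(q, v_{k-1}) > (1+ε) d(q, P)`, then `k ≤ 1 + log(1 + 2Φ) / log(1/(1 - ε/4))`. -/
theorem stmt_13 {X : Type*} [MetricSpace X] (P : Set X) (hfin : P.Finite)
    (hcard : 2 ≤ Nat.card P) (Φ : ℝ)
    (hΦ : Φ = Metric.diam P / sInf {r : ℝ | ∃ x ∈ P, ∃ y ∈ P, x ≠ y ∧ r = dist x y})
    (ε : ℝ) (hε : ε ∈ Set.Ioo (0 : ℝ) 1) (q : X)
    (k : ℕ) (hk : 1 ≤ k) (v : ℕ → X) (hv : ∀ m ≤ k, v m ∈ P)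
    (hstep : ∀ m < k, dist q (v (m + 1)) ≤ (1 - ε / 4) * dist q (v m))
    (hlast : (1 + ε) * Metric.infDist q P < dist q (v (k - 1))) :
    (k : ℝ) ≤ 1 + Real.log (1 + 2 * Φ) / Real.log (1 / (1 - ε / 4)) := by
  obtain ⟨hε0, hε1⟩ := hε
  set c : ℝ := 1 - ε / 4 with hc
  have hc0 : 0 < c := by rw [hc]; linarith
  have hc1 : c < 1 := by rw [hc]; linarith
  set S := {r : ℝ | ∃ x ∈ P, ∃ y ∈ P, x ≠ y ∧ r = dist x y} with hS
  -- two distinct points of P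
  have hcard' : 1 < P.ncard := by
    rw [← Nat.card_coe_set_eq]; omega
  obtain ⟨a, b, ha, hb, hab⟩ := (Set.one_lt_ncard_iff hfin).mp hcard'
  have hSne : S.Nonempty := ⟨dist a b, a, ha, b, hb, hab, rfl⟩
  have hSfin : S.Finite := by
    apply ((hfin.prod hfin).image (fun p : X × X => dist p.1 p.2)).subset
    rintro r ⟨x, hx, y, hy, -, rfl⟩
    exact ⟨(x, y), ⟨hx, hy⟩, rfl⟩
  set cp := sInf S with hcp
  have hcp_mem : cp ∈ S := hSne.csInf_mem hSfin
  have hcp_pos : 0 < cp := by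
    obtain ⟨x, -, y, -, hxy, h⟩ := hcp_mem
    rw [h]; exact dist_pos.mpr hxy
  have hcp_le : ∀ x ∈ P, ∀ y ∈ P, x ≠ y → cp ≤ dist x y := fun x hx y hy hxy =>
    csInf_le hSfin.bddBelow ⟨x, hx, y, hy, hxy, rfl⟩
  -- nearest point
  obtain ⟨p, hpP, hpd⟩ := hfin.isCompact.exists_infDist_eq_dist ⟨a, ha⟩ q
  set D := Metric.infDist q P with hD
  have hD0 : 0 ≤ D := Metric.infDist_nonneg
  set dl := dist q (v (k - 1)) with hdl
  have hdl_pos : 0 < dl := lt_of_le_of_lt (by positivity) hlast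
  have hDlt : D < dl := lt_of_le_of_lt (by nlinarith) hlast
  have hvk : v (k - 1) ∈ P := hv (k - 1) (by omega)
  have hne : v (k - 1) ≠ p := by
    intro h
    have : dl = D := by rw [hdl, h]; exact hpd.symm
    nlinarith
  have hcpdl : cp ≤ dist q (v (k - 1)) + dist q p := by
    calc cp ≤ dist (v (k - 1)) p := hcp_le _ hvk _ hpP hne
    _ ≤ dist (v (k - 1)) q + dist q p := dist_triangle _ _ _
    _ = dist q (v (k - 1)) + dist q p := by rw [dist_comm]
  have hcp2 : cp < 2 * dl := by rw [← hdl] at hcpdl; linarith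
  -- d0 bound
  set d0 := dist q (v 0) with hd0
  have hdiam : Metric.diam P = Φ * cp := by
    rw [hΦ, div_mul_cancel₀ _ (ne_of_gt hcp_pos)]
  have hΦ0 : 0 ≤ Φ := by
    rw [hΦ]; exact div_nonneg Metric.diam_nonneg (le_of_lt hcp_pos)
  have hd0le : d0 ≤ D + Metric.diam P := by
    calc d0 ≤ dist q p + dist p (v 0) := dist_triangle _ _ _
    _ ≤ D + Metric.diam P := by
        rw [← hpd]
        exact add_le_add le_rfl
          (Metric.dist_le_diam_of_mem hfin.isBounded hpP (hv 0 (by omega)))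
  have hd0lt : d0 < (1 + 2 * Φ) * dl := by
    rw [hdiam] at hd0le
    nlinarith [mul_le_mul_of_nonneg_left (le_of_lt hcp2) hΦ0]
  -- geometric decay
  have hpow : ∀ m, m ≤ k → dist q (v m) ≤ c ^ m * d0 := by
    intro m
    induction m with
    | zero => intro _; simp [hd0]
    | succ n ih =>
      intro hnk
      have hn : n < k := by omega
      calc dist q (v (n + 1)) ≤ c * dist q (v n) := hstep n hn
      _ ≤ c * (c ^ n * d0) :=
        mul_le_mul_of_nonneg_left (ih (by omega)) (le_of_lt hc0)
      _ = c ^ (n + 1) * d0 := by ring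
  have h1 : dl ≤ c ^ (k - 1) * d0 := hpow (k - 1) (by omega)
  have hcpow : (0 : ℝ) < c ^ (k - 1) := pow_pos hc0 _
  have h2 : (1 / c) ^ (k - 1) ≤ d0 / dl := by
    rw [le_div_iff₀ hdl_pos, one_div, inv_pow]
    exact (inv_mul_le_iff₀ hcpow).mpr (by linarith)
  have h3 : d0 / dl < 1 + 2 * Φ := (div_lt_iff₀ hdl_pos).mpr hd0lt
  have hkey : (1 / c) ^ (k - 1) ≤ 1 + 2 * Φ := le_trans h2 (le_of_lt h3)
  have h1c : 1 < 1 / c := one_lt_one_div hc0 hc1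
  have hlogpos : 0 < Real.log (1 / c) := Real.log_pos h1c
  have hlog : ((k - 1 : ℕ) : ℝ) * Real.log (1 / c) ≤ Real.log (1 + 2 * Φ) := by
    rw [← Real.log_pow]
    exact Real.log_le_log (by positivity) hkey
  have hdiv : ((k - 1 : ℕ) : ℝ) ≤ Real.log (1 + 2 * Φ) / Real.log (1 / c) :=
    (le_div_iff₀ hlogpos).mpr hlog
  have hcast : ((k - 1 : ℕ) : ℝ) = (k : ℝ) - 1 := by
    rw [Nat.cast_sub hk]; simp
  rw [hcast] at hdiv
  linarith
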